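/- Let g(W) = h(‖W‖_F) with h : [0,∞) → ℝ strictly monotonically increasing, and let Φ ∈ ℝ^{d'×n}. Then any minimizer W of W ↦ ∑_{i=1}^n ℓ_i((WΦ)_i column-wise evaluations) + g(W) over ℝ^{k×d'} satisfies that Wᵀ lies in the column space of Φ, i.e. Wᵀ = Φα for some α ∈ ℝ^{n×k}. -/

import Mathlib

open Matrix

noncomputable def frobNorm {k d : ℕ} (W : Matrix (Fin k) (Fin d) ℝ) : ℝ :=
  Real.sqrt (∑ i, ∑ j, (W i j) ^ 2)

theorem representer_theorem (k d' n : ℕ) (Φ : Matrix (Fin d') (Fin n) ℝ)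
    (ℓ : Fin n → (Fin k → ℝ) → ℝ) (h : ℝ → ℝ) (hmono : StrictMonoOn h (Set.Ici 0))
    (W : Matrix (Fin k) (Fin d') ℝ)
    (hmin : ∀ W' : Matrix (Fin k) (Fin d') ℝ,
      (∑ i, ℓ i (fun j => (W * Φ) j i)) + h (frobNorm W)
        ≤ (∑ i, ℓ i (fun j => (W' * Φ) j i)) + h (frobNorm W')) :
    ∃ α : Matrix (Fin n) (Fin k) ℝ, Wᵀ = Φ * α := by
  classical
  let e : EuclideanSpace ℝ (Fin d') ≃ₗ[ℝ] (Fin d' → ℝ) := WithLp.linearEquiv 2 ℝ (Fin d' → ℝ)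
  let col : Fin n → EuclideanSpace ℝ (Fin d') := fun t => e.symm (fun j => Φ j t)
  let K : Submodule ℝ (EuclideanSpace ℝ (Fin d')) := Submodule.span ℝ (Set.range col)
  let r : Fin k → EuclideanSpace ℝ (Fin d') := fun i => e.symm (W i)
  let W' : Matrix (Fin k) (Fin d') ℝ :=
    fun i => e ((Submodule.orthogonalProjectionOnto K (r i) : EuclideanSpace ℝ (Fin d')))
  have hinner : ∀ x y : EuclideanSpace ℝ (Fin d'), (inner ℝ x y : ℝ) = ∑ j, x j * y j := by
    intro x y
    simp [PiLp.inner_apply, RCLike.inner_apply, mul_comm]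
  have hnorm : ∀ x : EuclideanSpace ℝ (Fin d'), ‖x‖ ^ 2 = ∑ j, (x j) ^ 2 := by
    intro x
    rw [EuclideanSpace.norm_eq, Real.sq_sqrt (by positivity)]
    simp [sq_abs]
  -- W' * Φ = W * Φ
  have hWΦ : W' * Φ = W * Φ := by
    ext i t
    have hmem : r i - (Submodule.orthogonalProjectionOnto K (r i) : EuclideanSpace ℝ (Fin d')) ∈ Kᗮ :=
      Submodule.sub_starProjection_mem_orthogonal (K := K) (r i)
    have hcol : col t ∈ K := Submodule.subset_span ⟨t, rfl⟩
    have h0 : (inner ℝ (col t)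
        (r i - (Submodule.orthogonalProjectionOnto K (r i) : EuclideanSpace ℝ (Fin d'))) : ℝ) = 0 :=
      (Submodule.mem_orthogonal K _).mp hmem (col t) hcol
    rw [hinner] at h0
    have h0' : ∑ j, Φ j t * (W i j - W' i j) = 0 := by
      exact h0
    have hsub : (W * Φ) i t - (W' * Φ) i t = 0 := by
      rw [mul_apply, mul_apply, ← Finset.sum_sub_distrib, ← h0']
      congr 1; ext j; ring
    linarith
  -- termwise norm comparison
  have hterm : ∀ i, ∑ j, (W' i j) ^ 2 ≤ ∑ j, (W i j) ^ 2 := by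
    intro i
    have hpyth := Submodule.norm_sq_eq_add_norm_sq_projection (r i) K
    simp only [Submodule.coe_norm] at hpyth
    have hW'i : ‖(Submodule.orthogonalProjectionOnto K (r i) : EuclideanSpace ℝ (Fin d'))‖ ^ 2
        = ∑ j, (W' i j) ^ 2 := hnorm _
    have hWi : ‖r i‖ ^ 2 = ∑ j, (W i j) ^ 2 := hnorm _
    nlinarith [sq_nonneg ‖(Submodule.orthogonalProjectionOnto Kᗮ (r i) : EuclideanSpace ℝ (Fin d'))‖]
  have hsumle : ∑ i, ∑ j, (W' i j) ^ 2 ≤ ∑ i, ∑ j, (W i j) ^ 2 :=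
    Finset.sum_le_sum fun i _ => hterm i
  have hfrle : frobNorm W' ≤ frobNorm W := Real.sqrt_le_sqrt hsumle
  have hkey := hmin W'
  rw [hWΦ] at hkey
  have hh : h (frobNorm W) ≤ h (frobNorm W') := by linarith
  have hfeq : frobNorm W = frobNorm W' := by
    rcases eq_or_lt_of_le hfrle with heq | hlt
    · exact heq.symm
    · exact absurd (hmono (Real.sqrt_nonneg _) (Real.sqrt_nonneg _) hlt) (not_lt.mpr hh)
  have hsseq : ∑ i, ∑ j, (W' i j) ^ 2 = ∑ i, ∑ j, (W i j) ^ 2 := by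
    have h1 : Real.sqrt (∑ i, ∑ j, (W i j) ^ 2) = Real.sqrt (∑ i, ∑ j, (W' i j) ^ 2) := hfeq
    have h2 : (0:ℝ) ≤ ∑ i, ∑ j, (W i j) ^ 2 := by positivity
    have h3 : (0:ℝ) ≤ ∑ i, ∑ j, (W' i j) ^ 2 := by positivity
    exact (Real.sqrt_inj h3 h2).mp h1.symm
  -- rows lie in K
  have hrow : ∀ i, r i ∈ K := by
    intro i
    have heq : ∑ j, (W' i j) ^ 2 = ∑ j, (W i j) ^ 2 := by
      by_contra hne
      have hlt : ∑ j, (W' i j) ^ 2 < ∑ j, (W i j) ^ 2 := lt_of_le_of_ne (hterm i) hne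
      have : ∑ i, ∑ j, (W' i j) ^ 2 < ∑ i, ∑ j, (W i j) ^ 2 :=
        Finset.sum_lt_sum (fun t _ => hterm t) ⟨i, Finset.mem_univ i, hlt⟩
      linarith [hsseq]
    have hpyth := Submodule.norm_sq_eq_add_norm_sq_projection (r i) K
    simp only [Submodule.coe_norm] at hpyth
    have hW'i : ‖(Submodule.orthogonalProjectionOnto K (r i) : EuclideanSpace ℝ (Fin d'))‖ ^ 2
        = ∑ j, (W' i j) ^ 2 := hnorm _
    have hWi : ‖r i‖ ^ 2 = ∑ j, (W i j) ^ 2 := hnorm _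
    have hperp0 : ‖(Submodule.orthogonalProjectionOnto Kᗮ (r i) : EuclideanSpace ℝ (Fin d'))‖ = 0 := by
      nlinarith [norm_nonneg ((Submodule.orthogonalProjectionOnto Kᗮ (r i) : EuclideanSpace ℝ (Fin d')))]
    have hperpz : (Submodule.orthogonalProjectionOnto Kᗮ (r i) : EuclideanSpace ℝ (Fin d')) = 0 :=
      norm_eq_zero.mp hperp0
    have hdecomp : (Submodule.orthogonalProjectionOnto K (r i) : EuclideanSpace ℝ (Fin d')) +
        (Submodule.orthogonalProjectionOnto Kᗮ (r i) : EuclideanSpace ℝ (Fin d')) = r i :=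
      Submodule.starProjection_add_starProjection_orthogonal (K := K) (r i)
    rw [hperpz, add_zero] at hdecomp
    rw [← hdecomp]
    exact (Submodule.orthogonalProjectionOnto K (r i)).2
  -- extract coefficients
  have hcoef : ∀ i, ∃ c : Fin n → ℝ, ∑ t, c t • col t = r i := fun i =>
    (Submodule.mem_span_range_iff_exists_fun ℝ).mp (hrow i)
  choose c hc using hcoef
  refine ⟨fun t i => c i t, ?_⟩
  ext j i
  have h1 := congrArg e (hc i)
  rw [map_sum] at h1
  have h2 : ∀ t, e (c i t • col t) = c i t • (fun j => Φ j t : Fin d' → ℝ) := by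
    intro t
    rw [_root_.map_smul]
    exact congrArg _ (e.apply_symm_apply _)
  simp only [h2] at h1
  have h3 : e (r i) = W i := e.apply_symm_apply _
  rw [h3] at h1
  have h4 := congrFun h1 j
  simp only [Finset.sum_apply, Pi.smul_apply, smul_eq_mul] at h4
  simp only [transpose_apply, mul_apply]
  rw [← h4]
  exact Finset.sum_congr rfl fun t _ => by ring
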